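/- Under the gauge action on null metric hypersurface data, the derived tensors transform as G_{(z,ζ)}(P) = P − 2n⊗_sζ and G_{(z,ζ)}(n) = z⁻¹n; that is, if (γ,ℓ',ℓ⁽²⁾') = (γ, z(ℓ+γ(ζ,·)), z²(ℓ⁽²⁾+2ℓ(ζ)+γ(ζ,ζ))), then the unique P', n' satisfying the four defining contraction relations with the primed data are P' = P − n⊗ζ − ζ⊗n and n' = z⁻¹n. -/

import Mathlib

open Module LinearMap

variable {V : Type*} [AddCommGroup V] [Module ℝ V] [FiniteDimensional ℝ V]

/-- Under the gauge transformation `ℓ' = z(ℓ + γ(ζ,·))`, `ℓ⁽²⁾' = z²(ℓ⁽²⁾+2ℓ(ζ)+γ(ζ,ζ))`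
(with `γ` unchanged), the tensors `P' = P - n⊗ζ - ζ⊗n` and `n' = z⁻¹ n` satisfy the four
defining contraction relations for the transformed data, and they are the unique such. -/
theorem gauge_transformation_of_P_and_n
    (γ : V →ₗ[ℝ] Dual ℝ V) (ℓ : Dual ℝ V) (l2 : ℝ) (n : V) (P : Dual ℝ V →ₗ[ℝ] V)
    (hγsym : ∀ x y, γ x y = γ y x)
    (hrad : ∀ x : V, γ x = 0 → ∃ c : ℝ, x = c • n)
    (hγn : γ n = 0)
    (hℓn : ℓ n = 1)
    (hPsym : ∀ ω χ : Dual ℝ V, ω (P χ) = χ (P ω))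
    (hPℓ : P ℓ + l2 • n = 0)
    (hPγ : ∀ x : V, P (γ x) + ℓ x • n = x)
    (z : ℝ) (hz : z ≠ 0) (ζ : V)
    -- the gauge-transformed data and the claimed transformed tensors
    (ℓ' : Dual ℝ V) (hℓ' : ℓ' = z • (ℓ + γ ζ))
    (l2' : ℝ) (hl2' : l2' = z ^ 2 * (l2 + 2 * ℓ ζ + γ ζ ζ))
    (P' : Dual ℝ V →ₗ[ℝ] V)
    (hP' : P' = P - (Dual.eval ℝ V ζ).smulRight n - (Dual.eval ℝ V n).smulRight ζ)
    (n' : V) (hn' : n' = z⁻¹ • n) :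
    -- P', n' satisfy the four defining relations for the primed data
    (γ n' = 0 ∧ ℓ' n' = 1 ∧ P' ℓ' + l2' • n' = 0 ∧ ∀ x : V, P' (γ x) + ℓ' x • n' = x) ∧
    -- and they are the unique tensors doing so
    (∀ (P'' : Dual ℝ V →ₗ[ℝ] V) (n'' : V),
      γ n'' = 0 → ℓ' n'' = 1 → P'' ℓ' + l2' • n'' = 0 →
      (∀ x : V, P'' (γ x) + ℓ' x • n'' = x) →
      (∀ ω χ : Dual ℝ V, ω (P'' χ) = χ (P'' ω)) →
      P'' = P' ∧ n'' = n') := by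
  have hγxn : ∀ x, γ x n = 0 := fun x => by rw [hγsym]; simp [hγn]
  have hPl : P ℓ = -(l2 • n) := by
    have := hPℓ; linear_combination (norm := module) this
  have hPγ' : ∀ x : V, P (γ x) = x - ℓ x • n := fun x => by
    have := hPγ x; linear_combination (norm := module) this
  -- the four relations
  have h1' : γ n' = 0 := by rw [hn']; simp [hγn]
  have hln' : ℓ' n = z := by
    rw [hℓ']; simp [hℓn, hγxn]
  have h2' : ℓ' n' = 1 := by
    rw [hn', map_smul, hln', smul_eq_mul]
    field_simp
  have hP'apply : ∀ ω : Dual ℝ V, P' ω = P ω - ω ζ • n - ω n • ζ := fun ω => by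
    rw [hP']; simp
  have h3' : P' ℓ' + l2' • n' = 0 := by
    rw [hP'apply, hℓ', hl2', hn']
    simp only [map_smul, map_add, LinearMap.add_apply, LinearMap.smul_apply, smul_eq_mul,
      hPl, hPγ' ζ, smul_smul, hℓn, hγxn]
    have hzz : z ^ 2 * (l2 + 2 * ℓ ζ + γ ζ ζ) * z⁻¹ = z * (l2 + 2 * ℓ ζ + γ ζ ζ) := by
      field_simp
    rw [hzz]
    match_scalars <;> ring
  have h4' : ∀ x : V, P' (γ x) + ℓ' x • n' = x := fun x => by
    rw [hP'apply, hℓ', hn', hPγ' x, hγxn x, hγsym x ζ]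
    simp only [LinearMap.smul_apply, LinearMap.add_apply, smul_smul, smul_eq_mul]
    have hzz : z * (ℓ x + γ ζ x) * z⁻¹ = ℓ x + γ ζ x := by field_simp
    rw [hzz]
    match_scalars <;> ring
  refine ⟨⟨h1', h2', h3', h4'⟩, ?_⟩
  intro P'' n'' k1 k2 k3 k4 ksym
  -- n'' = n'
  obtain ⟨c, hc⟩ := hrad n'' k1
  have hcz : c * z = 1 := by
    have := k2; rw [hc, map_smul, hln', smul_eq_mul] at this; exact this
  have hnn : n'' = n' := by
    rw [hc, hn']
    congr 1
    field_simp at hcz ⊢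
    linarith
  refine ⟨?_, hnn⟩
  -- duality identity: ω = γ (P'' ω) + ω n'' • ℓ'
  have key : ∀ ω : Dual ℝ V, ω = γ (P'' ω) + ω n'' • ℓ' := by
    intro ω
    ext x
    have e1 : γ (P'' ω) x = γ x (P'' ω) := hγsym _ _
    have e2 : ω (P'' (γ x)) = γ x (P'' ω) := ksym ω (γ x)
    have e3 : P'' (γ x) = x - ℓ' x • n'' := by
      have := k4 x; linear_combination (norm := module) this
    rw [e3] at e2
    simp only [map_sub, map_smul, smul_eq_mul] at e2
    simp only [LinearMap.add_apply, LinearMap.smul_apply, smul_eq_mul, e1, ← e2]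
    ring
  -- uniqueness of P''
  ext ω
  have hk := key ω
  have a1 : P'' ω = P'' (γ (P'' ω)) + ω n'' • P'' ℓ' := by
    conv_lhs => rw [hk]
    simp
  have a2 : P' ω = P' (γ (P'' ω)) + ω n'' • P' ℓ' := by
    conv_lhs => rw [hk]
    simp
  have b1 : P'' (γ (P'' ω)) = P'' ω - ℓ' (P'' ω) • n'' := by
    have := k4 (P'' ω); linear_combination (norm := module) this
  have b2 : P' (γ (P'' ω)) = P'' ω - ℓ' (P'' ω) • n' := by
    have := h4' (P'' ω); linear_combination (norm := module) this
  have c1 : P'' ℓ' = -(l2' • n'') := by linear_combination (norm := module) k3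
  have c2 : P' ℓ' = -(l2' • n') := by linear_combination (norm := module) h3'
  rw [b1, c1] at a1
  rw [a2, b2, c2, ← hnn]
  linear_combination (norm := module) a1
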